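/- Let 0 < r < 1 and let A, B be invertible bounded operators in C_{1,r} on a complex Hilbert space H that doubly commute (AB = BA and AB* = B*A). Let H₁ be the maximal closed subspace of H reducing A on which (1+r²)‖x‖² = ‖Ax‖² + r²‖A⁻*x‖² holds for all x ∈ H₁, and let H₂ = H ⊖ H₁ be its orthogonal complement. Then H₁ and H₂ are reducing subspaces for B, i.e. BH₁ ⊆ H₁, B*H₁ ⊆ H₁, BH₂ ⊆ H₂, and B*H₂ ⊆ H₂. -/

import Mathlib

set_option maxHeartbeats 1000000


open ContinuousLinearMap

variable {H : Type*} [NormedAddCommGroup H] [InnerProductSpace ℂ H] [CompleteSpace H]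

/-- `T ∈ C_{1,r}`: `T` is invertible, `‖T‖ ≤ 1` and `‖r • T⁻¹‖ ≤ 1`. -/
def MemC1r (r : ℝ) (T : H →L[ℂ] H) : Prop :=
  IsUnit T ∧ ‖T‖ ≤ 1 ∧ ‖(r : ℂ) • Ring.inverse T‖ ≤ 1

/-- A closed subspace `L` reduces `T` if `L` is invariant under both `T` and `T*`. -/
def Reduces (T : H →L[ℂ] H) (L : Submodule ℂ H) : Prop :=
  ∀ x ∈ L, T x ∈ L ∧ adjoint T x ∈ L

/-- `T` restricted to `L` is of class `𝒞_{1,r}`: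
`(1+r²)‖x‖² = ‖Tx‖² + r²‖T⁻*x‖²` for all `x ∈ L`. -/
def RestrictedScriptC1r (r : ℝ) (T : H →L[ℂ] H) (L : Submodule ℂ H) : Prop :=
  ∀ x ∈ L, (1 + r ^ 2) * ‖x‖ ^ 2 = ‖T x‖ ^ 2 + r ^ 2 * ‖adjoint (Ring.inverse T) x‖ ^ 2

local notation "⟪" x ", " y "⟫" => @inner ℂ _ _ x y

/-- Cauchy–Schwarz for the semi-inner product induced by a positive operator
(real-part version). -/
lemma semi_cs {T : H →L[ℂ] H} (hT : T.IsPositive) (u v : H) :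
    (RCLike.re ⟪T u, v⟫) ^ 2 ≤ RCLike.re ⟪T u, u⟫ * RCLike.re ⟪T v, v⟫ := by
  have hsym := (hT.1)
  set a := RCLike.re ⟪T u, u⟫ with ha
  set b := RCLike.re ⟪T u, v⟫ with hb
  set c := RCLike.re ⟪T v, v⟫ with hc
  have ha0 : 0 ≤ a := by
    have := hT.2 u; rwa [ContinuousLinearMap.reApplyInnerSelf_apply] at this
  have hc0 : 0 ≤ c := by
    have := hT.2 v; rwa [ContinuousLinearMap.reApplyInnerSelf_apply] at this
  have hvu : RCLike.re ⟪T v, u⟫ = b := by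
    have h1 : ⟪T v, u⟫ = ⟪v, T u⟫ := hsym v u
    have h2 : ⟪v, T u⟫ = (starRingEnd ℂ) ⟪T u, v⟫ := (inner_conj_symm _ _).symm
    rw [hb, h1, h2, RCLike.re_to_complex, RCLike.re_to_complex, Complex.conj_re]
  have key : ∀ t : ℝ, 0 ≤ a + 2 * t * b + t ^ 2 * c := by
    intro t
    have h := hT.2 (u + (t : ℂ) • v)
    rw [ContinuousLinearMap.reApplyInnerSelf_apply] at h
    have expand : RCLike.re ⟪T (u + (t : ℂ) • v), u + (t : ℂ) • v⟫
        = a + 2 * t * b + t ^ 2 * c := by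
      simp only [map_add, map_smul, inner_add_left, inner_add_right, inner_smul_left,
        inner_smul_right, Complex.conj_ofReal, mul_assoc, Complex.re_ofReal_mul,
        RCLike.re_to_complex, Complex.add_re] at *
      rw [← ha, ← hb, ← hc] at *
      rw [hvu]; ring
    rw [expand] at h; exact h
  rcases eq_or_lt_of_le hc0 with h0 | h0
  · rcases eq_or_ne b 0 with hb0 | hb0
    · rw [hb0, ← h0]; simp
    · exfalso
      have h := key (-(a + 1) / (2 * b))
      rw [← h0] at h
      have e : a + 2 * (-(a + 1) / (2 * b)) * b + (-(a + 1) / (2 * b)) ^ 2 * 0 = -1 := by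
        field_simp
        ring
      rw [e] at h
      linarith
  · have := key (-b / c)
    have hcne : c ≠ 0 := ne_of_gt h0
    have h4 : 0 ≤ (a + 2 * (-b / c) * b + (-b / c) ^ 2 * c) * c := mul_nonneg this h0.le
    have h5 : (a + 2 * (-b / c) * b + (-b / c) ^ 2 * c) * c = a * c - b ^ 2 := by
      field_simp; ring
    rw [h5] at h4; linarith

lemma pos_inner_zero {T : H →L[ℂ] H} (hT : T.IsPositive) {x : H}
    (hx : RCLike.re ⟪T x, x⟫ = 0) : T x = 0 := by
  have h := semi_cs hT x (T x)
  rw [hx] at h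
  have h1 : RCLike.re ⟪T x, T x⟫ = ‖T x‖ ^ 2 := by exact inner_self_eq_norm_sq (𝕜 := ℂ) _
  rw [h1] at h
  have : ‖T x‖ ^ 2 = 0 := by nlinarith [sq_nonneg (‖T x‖ ^ 2)]
  have : ‖T x‖ = 0 := by nlinarith
  exact norm_eq_zero.mp this

/-- The defect operator. -/
noncomputable def Dop (r : ℝ) (A : H →L[ℂ] H) : H →L[ℂ] H :=
  (((1 + r ^ 2 : ℝ)) : ℂ) • 1 - adjoint A * A
    - ((r ^ 2 : ℝ) : ℂ) • (Ring.inverse A * adjoint (Ring.inverse A))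

lemma Dop_inner (r : ℝ) (A : H →L[ℂ] H) (x : H) :
    RCLike.re ⟪Dop r A x, x⟫
      = (1 + r ^ 2) * ‖x‖ ^ 2 - ‖A x‖ ^ 2 - r ^ 2 * ‖adjoint (Ring.inverse A) x‖ ^ 2 := by
  have hS : ⟪Ring.inverse A ((adjoint (Ring.inverse A)) x), x⟫
      = ⟪adjoint (Ring.inverse A) x, adjoint (Ring.inverse A) x⟫ := by
    have h := adjoint_inner_left (adjoint (Ring.inverse A)) x ((adjoint (Ring.inverse A)) x)
    rwa [adjoint_adjoint] at h
  rw [Dop]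
  simp only [sub_apply, smul_apply, one_apply_eq_self, mul_apply_eq_comp, inner_sub_left, inner_smul_left,
    Complex.conj_ofReal]
  rw [adjoint_inner_left, hS]
  have hself : ∀ z : H, (⟪z, z⟫).re = ‖z‖ ^ 2 := fun z => by
    rw [← RCLike.re_to_complex]; exact inner_self_eq_norm_sq z
  simp only [RCLike.re_to_complex, Complex.sub_re, Complex.re_ofReal_mul, hself]

lemma Dop_selfAdjoint (r : ℝ) (A : H →L[ℂ] H) : IsSelfAdjoint (Dop r A) := by
  simp only [IsSelfAdjoint, Dop, star_sub, star_smul, star_one, star_mul, star_eq_adjoint,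
    adjoint_adjoint, RCLike.star_def, Complex.conj_ofReal]

lemma Dop_isPositive (r : ℝ) (hr0 : 0 < r) (hr1 : r < 1) (A : H →L[ℂ] H) (hAmem : MemC1r r A) :
    (Dop r A).IsPositive := by
  obtain ⟨hA, hn1, hn2⟩ := hAmem
  have hinv : r * ‖Ring.inverse A‖ ≤ 1 := by
    rwa [norm_smul, Complex.norm_real, Real.norm_eq_abs, abs_of_pos hr0] at hn2
  have hadjA : ‖adjoint A‖ = ‖A‖ := ContinuousLinearMap.adjoint.norm_map A
  have hadjI : ‖adjoint (Ring.inverse A)‖ = ‖Ring.inverse A‖ :=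
    ContinuousLinearMap.adjoint.norm_map (Ring.inverse A)
  -- key products
  have e1 : adjoint A * adjoint (Ring.inverse A) = 1 := by
    have := congrArg star (Ring.inverse_mul_cancel A hA)
    simpa [star_mul, star_eq_adjoint] using this
  have e2 : adjoint (Ring.inverse A) * adjoint A = 1 := by
    have := congrArg star (Ring.mul_inverse_cancel A hA)
    simpa [star_mul, star_eq_adjoint] using this
  set Q : H →L[ℂ] H := 1 - A * adjoint A with hQ
  have hQform : ∀ u : H, RCLike.re ⟪Q u, u⟫ = ‖u‖ ^ 2 - ‖adjoint A u‖ ^ 2 := by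
    intro u
    have h1 : ⟪(A * adjoint A) u, u⟫ = ⟪adjoint A u, adjoint A u⟫ := by
      rw [mul_apply_eq_comp]
      exact (adjoint_inner_right A (adjoint A u) u).symm
    have hself : ∀ z : H, (⟪z, z⟫).re = ‖z‖ ^ 2 := fun z => by
      rw [← RCLike.re_to_complex]; exact inner_self_eq_norm_sq z
    simp only [hQ, sub_apply, one_apply_eq_self, inner_sub_left, h1]
    simp only [RCLike.re_to_complex, Complex.sub_re, hself]
  have hAstar_le : ∀ u : H, ‖adjoint A u‖ ≤ ‖u‖ := by
    intro u
    calc ‖adjoint A u‖ ≤ ‖adjoint A‖ * ‖u‖ := (adjoint A).le_opNorm u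
    _ ≤ 1 * ‖u‖ := by rw [hadjA]; exact mul_le_mul_of_nonneg_right hn1 (norm_nonneg u)
    _ = ‖u‖ := one_mul _
  have hAstar_ge : ∀ u : H, r * ‖u‖ ≤ ‖adjoint A u‖ := by
    intro u
    have h1 : adjoint (Ring.inverse A) (adjoint A u) = u := by
      rw [← mul_apply_eq_comp, e2, one_apply_eq_self]
    have h2 : ‖u‖ ≤ ‖Ring.inverse A‖ * ‖adjoint A u‖ := by
      calc ‖u‖ = ‖adjoint (Ring.inverse A) (adjoint A u)‖ := by rw [h1]
      _ ≤ ‖adjoint (Ring.inverse A)‖ * ‖adjoint A u‖ := le_opNorm _ _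
      _ = ‖Ring.inverse A‖ * ‖adjoint A u‖ := by rw [hadjI]
    nlinarith [norm_nonneg (adjoint A u), norm_nonneg (Ring.inverse A), norm_nonneg u]
  have hQpos : Q.IsPositive := by
    constructor
    · rw [← isSelfAdjoint_iff_isSymmetric]; simp only [hQ, IsSelfAdjoint, star_sub, star_one, star_mul, star_eq_adjoint,
        adjoint_adjoint]
    · intro u
      rw [ContinuousLinearMap.reApplyInnerSelf_apply, hQform]
      nlinarith [hAstar_le u, norm_nonneg u, norm_nonneg (adjoint A u)]
  have hQbd : ∀ u : H, RCLike.re ⟪Q u, u⟫ ≤ (1 - r ^ 2) * ‖u‖ ^ 2 := by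
    intro u
    rw [hQform]
    nlinarith [hAstar_ge u, norm_nonneg u, norm_nonneg (adjoint A u),
      mul_nonneg hr0.le (norm_nonneg u)]
  refine ⟨isSelfAdjoint_iff_isSymmetric.mp (Dop_selfAdjoint r A), fun x => ?_⟩
  rw [ContinuousLinearMap.reApplyInnerSelf_apply, Dop_inner]
  set y := adjoint (Ring.inverse A) x with hy
  have hxy : adjoint A y = x := by rw [hy, ← mul_apply_eq_comp, e1, one_apply_eq_self]
  set q := RCLike.re ⟪Q y, y⟫ with hq
  have hq0 : 0 ≤ q := by
    have := hQpos.2 y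
    rwa [ContinuousLinearMap.reApplyInnerSelf_apply] at this
  have hAx : A x = y - Q y := by
    simp only [hQ, sub_apply, one_apply_eq_self, mul_apply_eq_comp, hxy, sub_sub_cancel]
  have hxnorm : ‖x‖ ^ 2 = ‖y‖ ^ 2 - q := by
    rw [← hxy, hq, hQform]; ring
  have hAxnorm : ‖A x‖ ^ 2 = ‖y‖ ^ 2 - 2 * q + ‖Q y‖ ^ 2 := by
    rw [hAx, @norm_sub_sq ℂ]
    have h1 : RCLike.re ⟪y, Q y⟫ = q := by
      rw [hq, ← inner_conj_symm, RCLike.re_to_complex, RCLike.re_to_complex, Complex.conj_re]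
    rw [h1]
  have g3 : ‖Q y‖ ^ 2 ≤ (1 - r ^ 2) * q := by
    have cs := semi_cs hQpos y (Q y)
    have c1 : RCLike.re ⟪Q y, Q y⟫ = ‖Q y‖ ^ 2 := by exact inner_self_eq_norm_sq (𝕜 := ℂ) _
    have c2 : RCLike.re ⟪Q (Q y), Q y⟫ ≤ (1 - r ^ 2) * ‖Q y‖ ^ 2 := hQbd (Q y)
    rw [c1] at cs
    have c3 : 0 ≤ RCLike.re ⟪Q (Q y), Q y⟫ := by
      have := hQpos.2 (Q y)
      rwa [ContinuousLinearMap.reApplyInnerSelf_apply] at this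
    rcases eq_or_lt_of_le (norm_nonneg (Q y)) with h0 | h0
    · rw [← h0]
      have : (0:ℝ) ≤ 1 - r ^ 2 := by nlinarith
      nlinarith [mul_nonneg this hq0]
    · have hQy2 : 0 < ‖Q y‖ ^ 2 := by positivity
      nlinarith [mul_le_mul_of_nonneg_left c2 hq0]
  rw [hxnorm, hAxnorm]
  nlinarith

/-- Operators corresponding to words in `A` and `A*`. -/
noncomputable def wordOp (A : H →L[ℂ] H) : List Bool → (H →L[ℂ] H)
  | [] => 1
  | b :: l => (if b then A else adjoint A) * wordOp A l

lemma wordOp_append (A : H →L[ℂ] H) (l : List Bool) (b : Bool) :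
    wordOp A (l ++ [b]) = wordOp A l * (if b then A else adjoint A) := by
  induction l with
  | nil => simp [wordOp]
  | cons c l ih => simp [wordOp, ih, mul_assoc]

lemma wordOp_comm {A B : H →L[ℂ] H} (h1 : B * A = A * B)
    (h2 : B * adjoint A = adjoint A * B) :
    ∀ l : List Bool, B * wordOp A l = wordOp A l * B := by
  intro l
  induction l with
  | nil => simp [wordOp]
  | cons c l ih =>
    cases c
    · show B * (adjoint A * wordOp A l) = (adjoint A * wordOp A l) * B
      rw [← mul_assoc, h2, mul_assoc, ih, ← mul_assoc]
    · show B * (A * wordOp A l) = (A * wordOp A l) * B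
      rw [← mul_assoc, h1, mul_assoc, ih, ← mul_assoc]

lemma wordOp_mem {A : H →L[ℂ] H} {L : Submodule ℂ H} (hred : Reduces A L)
    {x : H} (hx : x ∈ L) : ∀ l : List Bool, wordOp A l x ∈ L := by
  intro l
  induction l with
  | nil => simpa [wordOp] using hx
  | cons c l ih =>
    show (if c then A else adjoint A) (wordOp A l x) ∈ L
    cases c
    · simpa using (hred _ ih).2
    · simpa using (hred _ ih).1

lemma comm_inv {A B : H →L[ℂ] H} (hA : IsUnit A) (h : B * A = A * B) :
    B * Ring.inverse A = Ring.inverse A * B := by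
  calc B * Ring.inverse A = Ring.inverse A * (A * B) * Ring.inverse A := by
        rw [← mul_assoc, Ring.inverse_mul_cancel A hA, one_mul]
    _ = Ring.inverse A * (B * A) * Ring.inverse A := by rw [h]
    _ = Ring.inverse A * B := by
        rw [mul_assoc, mul_assoc, Ring.mul_inverse_cancel A hA, mul_one]

theorem stmt15 (r : ℝ) (hr0 : 0 < r) (hr1 : r < 1) (A B : H →L[ℂ] H)
    (hA : IsUnit A) (hB : IsUnit B) (hAmem : MemC1r r A) (hBmem : MemC1r r B)
    (hcomm : A * B = B * A) (hcomm' : A * adjoint B = adjoint B * A)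
    (H₁ : Submodule ℂ H) (hclosed : IsClosed (H₁ : Set H)) (hred : Reduces A H₁)
    (hres : RestrictedScriptC1r r A H₁)
    (hmax : ∀ L : Submodule ℂ H, IsClosed (L : Set H) → Reduces A L →
      RestrictedScriptC1r r A L → L ≤ H₁) :
    Reduces B H₁ ∧ Reduces B H₁ᗮ := by
  have hDpos := Dop_isPositive r hr0 hr1 A hAmem
  -- the explicit candidate for the maximal reducing subspace
  set M : Submodule ℂ H := ⨅ l : List Bool, LinearMap.ker ((Dop r A ∘L wordOp A l : H →L[ℂ] H) : H →ₗ[ℂ] H) with hMdef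
  have memM : ∀ x : H, x ∈ M ↔ ∀ l : List Bool, Dop r A (wordOp A l x) = 0 := by
    intro x
    simp [hMdef, Submodule.mem_iInf, LinearMap.mem_ker]
  have hMclosed : IsClosed (M : Set H) := by
    rw [hMdef, Submodule.coe_iInf]
    exact isClosed_iInter fun l => ContinuousLinearMap.isClosed_ker _
  have hMred : Reduces A M := by
    intro x hx
    rw [memM] at hx
    constructor
    · rw [memM]
      intro l
      have h := hx (l ++ [true])
      rwa [wordOp_append, mul_apply_eq_comp, if_pos rfl] at h
    · rw [memM]
      intro l
      have h := hx (l ++ [false])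
      rwa [wordOp_append, mul_apply_eq_comp, if_neg (by simp)] at h
  have hMres : RestrictedScriptC1r r A M := by
    intro x hx
    rw [memM] at hx
    have h := hx []
    rw [show wordOp A [] = (1 : H →L[ℂ] H) from rfl, one_apply_eq_self] at h
    have h2 := Dop_inner r A x
    rw [h] at h2
    simp only [inner_zero_left, map_zero] at h2
    linarith
  have hH1M : H₁ ≤ M := by
    intro x hx
    rw [memM]
    intro l
    have hwl : wordOp A l x ∈ H₁ := wordOp_mem hred hx l
    have h := hres _ hwl
    have h2 := Dop_inner r A (wordOp A l x)
    exact pos_inner_zero hDpos (by rw [h2]; linarith)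
  have hM : M = H₁ := le_antisymm (hmax M hMclosed hMred hMres) hH1M
  -- commutation facts
  have cB1 : B * A = A * B := hcomm.symm
  have cB2 : B * adjoint A = adjoint A * B := by
    have := congrArg star hcomm'
    simpa [star_mul, star_eq_adjoint, adjoint_adjoint] using this
  have cB3 : B * Ring.inverse A = Ring.inverse A * B := comm_inv hA cB1
  have cB4 : B * adjoint (Ring.inverse A) = adjoint (Ring.inverse A) * B := by
    have hstar : Ring.inverse (adjoint A) = adjoint (Ring.inverse A) := by
      rw [← star_eq_adjoint, Ring.inverse_star, star_eq_adjoint]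
    have hAstar : IsUnit (adjoint A) := by
      rw [← star_eq_adjoint]; exact hA.star
    have := comm_inv hAstar cB2
    rwa [hstar] at this
  have cB'1 : adjoint B * A = A * adjoint B := hcomm'.symm
  have cB'2 : adjoint B * adjoint A = adjoint A * adjoint B := by
    have := congrArg star hcomm
    simpa [star_mul, star_eq_adjoint] using this
  have cB'3 : adjoint B * Ring.inverse A = Ring.inverse A * adjoint B := comm_inv hA cB'1
  have cB'4 : adjoint B * adjoint (Ring.inverse A)
      = adjoint (Ring.inverse A) * adjoint B := by
    have hstar : Ring.inverse (adjoint A) = adjoint (Ring.inverse A) := by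
      rw [← star_eq_adjoint, Ring.inverse_star, star_eq_adjoint]
    have hAstar : IsUnit (adjoint A) := by
      rw [← star_eq_adjoint]; exact hA.star
    have := comm_inv hAstar cB'2
    rwa [hstar] at this
  have commD : ∀ C : H →L[ℂ] H, C * A = A * C → C * adjoint A = adjoint A * C →
      C * Ring.inverse A = Ring.inverse A * C →
      C * adjoint (Ring.inverse A) = adjoint (Ring.inverse A) * C →
      C * Dop r A = Dop r A * C := by
    intro C c1 c2 c3 c4
    have t1 : C * (adjoint A * A) = (adjoint A * A) * C := by
      rw [← mul_assoc, c2, mul_assoc, c1, ← mul_assoc]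
    have t2 : C * (Ring.inverse A * adjoint (Ring.inverse A))
        = (Ring.inverse A * adjoint (Ring.inverse A)) * C := by
      rw [← mul_assoc, c3, mul_assoc, c4, ← mul_assoc]
    simp only [Dop, mul_sub, sub_mul, mul_smul_comm, smul_mul_assoc, mul_one, one_mul, t1, t2]
  have hpres : ∀ C : H →L[ℂ] H, C * A = A * C → C * adjoint A = adjoint A * C →
      C * Dop r A = Dop r A * C → ∀ x ∈ M, C x ∈ M := by
    intro C c1 c2 cD x hx
    rw [memM] at hx ⊢
    intro l
    have hw : wordOp A l (C x) = C (wordOp A l x) := by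
      rw [← mul_apply_eq_comp, ← wordOp_comm c1 c2 l, mul_apply_eq_comp]
    rw [hw, ← mul_apply_eq_comp, ← cD, mul_apply_eq_comp, hx l, map_zero]
  have hBH1 : Reduces B H₁ := by
    rw [← hM]
    intro x hx
    exact ⟨hpres B cB1 cB2 (commD B cB1 cB2 cB3 cB4) x hx,
      hpres (adjoint B) cB'1 cB'2 (commD _ cB'1 cB'2 cB'3 cB'4) x hx⟩
  refine ⟨hBH1, ?_⟩
  intro x hx
  constructor
  · rw [Submodule.mem_orthogonal]
    intro u hu
    rw [← adjoint_inner_left]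
    exact (Submodule.mem_orthogonal H₁ x).mp hx _ (hBH1 u hu).2
  · rw [Submodule.mem_orthogonal]
    intro u hu
    rw [adjoint_inner_right]
    exact (Submodule.mem_orthogonal H₁ x).mp hx _ (hBH1 u hu).1
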